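/- Let $H$, $H_1$, $H_2$ be finite-dimensional Hilbert spaces, $A: H_1 \to H$ and $B: H_2 \to H$ linear maps, $c \in H$, and $g: H_2 \to \mathbb{R} \cup \{+\infty\}$ proper, convex, and lower semicontinuous. Define $F(x) = \min_{y \in H_2} \left( \tfrac{1}{2}\|Ax + By + c\|^2 + g(y) \right)$. Then $F$ is differentiable with $\nabla F(x) = A^*(Ax + B y^*(x) + c)$ where $y^*(x)$ is any minimizer, and $\nabla F$ is Lipschitz continuous with Lipschitz constant $\|A\|^2$. -/

import Mathlib

set_option maxHeartbeats 1000000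
open scoped RealInnerProductSpace


/-- Smoothness of the marginal function `F x = min_y (½‖Ax + By + c‖² + g(y))`
for `g : H₂ → ℝ ∪ {+∞}` proper convex lsc: `F` is differentiable with
`∇F(x) = A*(Ax + B y*(x) + c)` for any minimizer `y*(x)`, and `∇F` is
Lipschitz continuous with constant `L = ‖A‖²`. -/
theorem stmt_0 {H H₁ H₂ : Type*}
    [NormedAddCommGroup H] [InnerProductSpace ℝ H] [FiniteDimensional ℝ H]
    [NormedAddCommGroup H₁] [InnerProductSpace ℝ H₁] [FiniteDimensional ℝ H₁]
    [NormedAddCommGroup H₂] [InnerProductSpace ℝ H₂] [FiniteDimensional ℝ H₂]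
    (A : H₁ →L[ℝ] H) (B : H₂ →L[ℝ] H) (c : H) (g : H₂ → EReal)
    -- g is proper (never -∞, somewhere finite):
    (hg_bot : ∀ y, g y ≠ ⊥) (hg_proper : ∃ y, g y ≠ ⊤)
    -- g is convex:
    (hg_convex : ∀ y₁ y₂ : H₂, ∀ t : ℝ, 0 ≤ t → t ≤ 1 →
      g (t • y₁ + (1 - t) • y₂) ≤ (t : EReal) * g y₁ + ((1 - t : ℝ) : EReal) * g y₂)
    -- g is lower semicontinuous:
    (hg_lsc : LowerSemicontinuous g)
    -- the joint functional f(x,y) = ½‖Ax + By + c‖² + g(y):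
    (f : H₁ → H₂ → EReal)
    (hf : ∀ x y, f x y = (((1 / 2 : ℝ) * ‖A x + B y + c‖ ^ 2 : ℝ) : EReal) + g y)
    -- a measurable-free selection of minimizers `y*`, with attained finite minimum:
    (ysel : H₁ → H₂)
    (hysel : ∀ x y, f x (ysel x) ≤ f x y) (hyfin : ∀ x, g (ysel x) ≠ ⊤)
    -- the marginal function `F x = min_y f(x,y)`:
    (F : H₁ → ℝ) (hF : ∀ x, F x = (f x (ysel x)).toReal) :
    -- F is differentiable with ∇F(x) = A*(Ax + B y*(x) + c) for *any* minimizer y*(x):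
    (∀ x y, (∀ y', f x y ≤ f x y') →
      HasGradientAt F (A.adjoint (A x + B y + c)) x)
    -- and ∇F is Lipschitz continuous with constant ‖A‖²:
    ∧ (∀ x₁ x₂ : H₁,
        ‖A.adjoint (A x₁ + B (ysel x₁) + c) - A.adjoint (A x₂ + B (ysel x₂) + c)‖
          ≤ ‖A‖ ^ 2 * ‖x₁ - x₂‖) := by
  -- g is finite at every minimizer
  have gfin : ∀ (x : H₁) (y : H₂), (∀ y', f x y ≤ f x y') → ∃ r : ℝ, g y = (r : EReal) := by
    intro x y hmin
    have hsel : g (ysel x) = ((g (ysel x)).toReal : EReal) :=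
      (EReal.coe_toReal (hyfin x) (hg_bot (ysel x))).symm
    have h1 : f x y ≤ f x (ysel x) := hmin (ysel x)
    have h2 : f x (ysel x) ≠ ⊤ := by
      rw [hf, hsel]
      exact_mod_cast EReal.coe_ne_top _
    have h3 : g y ≠ ⊤ := by
      intro htop
      apply h2
      have : f x y = ⊤ := by
        rw [hf, htop]
        exact EReal.add_top_of_ne_bot (EReal.coe_ne_bot _)
      exact top_le_iff.mp (this ▸ h1)
    exact ⟨(g y).toReal, (EReal.coe_toReal h3 (hg_bot y)).symm⟩
  -- one-sided variational inequality
  have one_sided : ∀ (x : H₁) (y₁ y₂ : H₂) (r₁ r₂ : ℝ), g y₁ = (r₁ : EReal) →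
      g y₂ = (r₂ : EReal) → (∀ y, f x y₁ ≤ f x y) →
      r₁ ≤ r₂ + ⟪A x + B y₁ + c, B y₂ - B y₁⟫ := by
    intro x y₁ y₂ r₁ r₂ h₁ h₂ hmin
    set v := A x + B y₁ + c with hv
    set w := B y₂ - B y₁ with hw
    have ht : ∀ t : ℝ, 0 < t → t ≤ 1 → r₁ ≤ r₂ + ⟪v, w⟫ + t * ‖w‖ ^ 2 / 2 := by
      intro t ht0 ht1
      have hmin' := hmin (t • y₂ + (1 - t) • y₁)
      have hconv := hg_convex y₂ y₁ t ht0.le ht1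
      have hBy : A x + B (t • y₂ + (1 - t) • y₁) + c = v + t • w := by
        simp only [map_add, map_smul, hv, hw]
        module
      have hchain : f x (t • y₂ + (1 - t) • y₁) ≤
          (((1 / 2 : ℝ) * ‖v + t • w‖ ^ 2 + (t * r₂ + (1 - t) * r₁) : ℝ) : EReal) := by
        rw [hf, hBy]
        calc _ ≤ (((1 / 2 : ℝ) * ‖v + t • w‖ ^ 2 : ℝ) : EReal) +
              ((t : EReal) * g y₂ + ((1 - t : ℝ) : EReal) * g y₁) := by
              exact add_le_add (le_refl _) hconv
          _ = _ := by rw [h₁, h₂]; norm_cast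
      have hle : (((1 / 2 : ℝ) * ‖v‖ ^ 2 + r₁ : ℝ) : EReal) ≤
          (((1 / 2 : ℝ) * ‖v + t • w‖ ^ 2 + (t * r₂ + (1 - t) * r₁) : ℝ) : EReal) := by
        refine le_trans ?_ (le_trans hmin' hchain)
        rw [hf, h₁, ← hv]
        norm_cast
      have hler : (1 / 2 : ℝ) * ‖v‖ ^ 2 + r₁ ≤
          (1 / 2 : ℝ) * ‖v + t • w‖ ^ 2 + (t * r₂ + (1 - t) * r₁) := by
        exact_mod_cast hle
      have hexp : ‖v + t • w‖ ^ 2 = ‖v‖ ^ 2 + 2 * (t * ⟪v, w⟫) + t ^ 2 * ‖w‖ ^ 2 := by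
        rw [norm_add_sq_real v (t • w), real_inner_smul_right, norm_smul,
          Real.norm_eq_abs, mul_pow, sq_abs]
      rw [hexp] at hler
      nlinarith [sq_nonneg t]
    by_contra hcon
    push_neg at hcon
    set ε := r₁ - (r₂ + ⟪v, w⟫) with hε
    have hεpos : 0 < ε := by linarith
    set t := min 1 (ε / (‖w‖ ^ 2 + 1)) with htdef
    have ht0 : 0 < t := lt_min one_pos (div_pos hεpos (by positivity))
    have ht1 : t ≤ 1 := min_le_left _ _
    have := ht t ht0 ht1
    have htle : t ≤ ε / (‖w‖ ^ 2 + 1) := min_le_right _ _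
    have hwpos : (0:ℝ) < ‖w‖ ^ 2 + 1 := by positivity
    have : t * ‖w‖ ^ 2 / 2 < ε := by
      have h1 : t * (‖w‖ ^ 2 + 1) ≤ ε := by
        rw [← div_mul_cancel₀ ε hwpos.ne']
        exact mul_le_mul_of_nonneg_right htle hwpos.le
      nlinarith [norm_nonneg w, sq_nonneg ‖w‖]
    linarith
  -- key Lipschitz-type estimate on the residual
  have key : ∀ (x₁ x₂ : H₁) (y₁ y₂ : H₂), (∀ y, f x₁ y₁ ≤ f x₁ y) →
      (∀ y, f x₂ y₂ ≤ f x₂ y) →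
      ‖(A x₁ + B y₁ + c) - (A x₂ + B y₂ + c)‖ ≤ ‖A‖ * ‖x₁ - x₂‖ := by
    intro x₁ x₂ y₁ y₂ hm₁ hm₂
    obtain ⟨r₁, hr₁⟩ := gfin x₁ y₁ hm₁
    obtain ⟨r₂, hr₂⟩ := gfin x₂ y₂ hm₂
    have h12 := one_sided x₁ y₁ y₂ r₁ r₂ hr₁ hr₂ hm₁
    have h21 := one_sided x₂ y₂ y₁ r₂ r₁ hr₂ hr₁ hm₂
    have hvd : (A x₁ + B y₁ + c) - (A x₂ + B y₂ + c)
        = (A x₁ - A x₂) + (B y₁ - B y₂) := by abel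
    have hmono : ⟪(A x₁ + B y₁ + c) - (A x₂ + B y₂ + c), B y₁ - B y₂⟫ ≤ 0 := by
      have e1 : ⟪A x₁ + B y₁ + c, B y₂ - B y₁⟫
          = -⟪A x₁ + B y₁ + c, B y₁ - B y₂⟫ := by
        rw [← inner_neg_right]
        congr 1
        abel
      rw [e1] at h12
      rw [inner_sub_left]
      linarith
    have hsq : ‖(A x₁ + B y₁ + c) - (A x₂ + B y₂ + c)‖ ^ 2 ≤
        ‖(A x₁ + B y₁ + c) - (A x₂ + B y₂ + c)‖ * ‖A x₁ - A x₂‖ := by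
      have hdec : ‖(A x₁ + B y₁ + c) - (A x₂ + B y₂ + c)‖ ^ 2 =
          ⟪(A x₁ + B y₁ + c) - (A x₂ + B y₂ + c), A x₁ - A x₂⟫ +
          ⟪(A x₁ + B y₁ + c) - (A x₂ + B y₂ + c), B y₁ - B y₂⟫ := by
        rw [← inner_add_right, ← hvd, real_inner_self_eq_norm_sq]
      rw [hdec]
      have := real_inner_le_norm ((A x₁ + B y₁ + c) - (A x₂ + B y₂ + c)) (A x₁ - A x₂)
      linarith
    have hnorm : ‖(A x₁ + B y₁ + c) - (A x₂ + B y₂ + c)‖ ≤ ‖A x₁ - A x₂‖ := by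
      rcases eq_or_lt_of_le (norm_nonneg ((A x₁ + B y₁ + c) - (A x₂ + B y₂ + c))) with hz | hz
      · rw [← hz]; exact norm_nonneg _
      · nlinarith
    calc ‖(A x₁ + B y₁ + c) - (A x₂ + B y₂ + c)‖ ≤ ‖A x₁ - A x₂‖ := hnorm
      _ = ‖A (x₁ - x₂)‖ := by rw [map_sub]
      _ ≤ ‖A‖ * ‖x₁ - x₂‖ := A.le_opNorm _
  -- value of F at a minimizer
  have Fval : ∀ (x : H₁) (y : H₂) (r : ℝ), g y = (r : EReal) → (∀ y', f x y ≤ f x y') →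
      F x = (1 / 2 : ℝ) * ‖A x + B y + c‖ ^ 2 + r := by
    intro x y r hr hmin
    have heq : f x (ysel x) = f x y := le_antisymm (hysel x y) (hmin (ysel x))
    rw [hF, heq, hf, hr]
    norm_cast
  constructor
  · -- gradient statement
    intro x y hmin
    obtain ⟨r, hr⟩ := gfin x y hmin
    set v := A x + B y + c with hv
    have hFx : F x = (1 / 2 : ℝ) * ‖v‖ ^ 2 + r := Fval x y r hr hmin
    -- two-sided bound on F x' - F x - ⟪v, A x' - A x⟫
    have hbound : ∀ x' : H₁,
        |F x' - F x - ⟪A.adjoint v, x' - x⟫| ≤ (3 / 2) * ‖A‖ ^ 2 * ‖x' - x‖ ^ 2 := by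
      intro x'
      set h := A x' - A x with hh
      have hip : ⟪A.adjoint v, x' - x⟫ = ⟪v, h⟫ := by
        rw [ContinuousLinearMap.adjoint_inner_left, map_sub]
      obtain ⟨r', hr'⟩ := gfin x' (ysel x') (hysel x')
      have hFx' : F x' = (1 / 2 : ℝ) * ‖A x' + B (ysel x') + c‖ ^ 2 + r' :=
        Fval x' (ysel x') r' hr' (hysel x')
      set v' := A x' + B (ysel x') + c with hv'
      -- upper bound : F x' ≤ F x + ⟪v, h⟫ + ½‖h‖²
      have hW : A x' + B y + c = v + h := by rw [hv, hh]; abel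
      have hup : F x' ≤ F x + ⟪v, h⟫ + (1 / 2) * ‖h‖ ^ 2 := by
        have h1 : f x' (ysel x') ≤ f x' y := hysel x' y
        rw [hf, hf, hr, hr'] at h1
        have h1' : (1 / 2 : ℝ) * ‖v'‖ ^ 2 + r' ≤ (1 / 2 : ℝ) * ‖v + h‖ ^ 2 + r := by
          rw [hv', ← hW]
          exact_mod_cast h1
        have hexp2 : ‖v + h‖ ^ 2 = ‖v‖ ^ 2 + 2 * ⟪v, h⟫ + ‖h‖ ^ 2 := norm_add_sq_real v h
        rw [hexp2] at h1'
        rw [hFx', hFx]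
        linarith
      -- lower bound : F x' ≥ F x + ⟪v', h⟫ - ½‖h‖²
      have hlo : F x + ⟪v', h⟫ - (1 / 2) * ‖h‖ ^ 2 ≤ F x' := by
        have h2 : f x y ≤ f x (ysel x') := hmin (ysel x')
        rw [hf, hf, hr, hr'] at h2
        have hW2 : A x + B (ysel x') + c = v' - h := by rw [hv', hh]; abel
        have h2' : (1 / 2 : ℝ) * ‖v‖ ^ 2 + r ≤ (1 / 2 : ℝ) * ‖v' - h‖ ^ 2 + r' := by
          rw [hv, ← hW2]
          exact_mod_cast h2
        have hexp3 : ‖v' - h‖ ^ 2 = ‖v'‖ ^ 2 - 2 * ⟪v', h⟫ + ‖h‖ ^ 2 := norm_sub_sq_real v' h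
        rw [hexp3] at h2'
        rw [hFx', hFx]
        linarith
      have hvv : ‖v' - v‖ ≤ ‖A‖ * ‖x' - x‖ := key x' x (ysel x') y (hysel x') hmin
      have hip2 : |⟪v' - v, h⟫| ≤ ‖A‖ ^ 2 * ‖x' - x‖ ^ 2 := by
        have := abs_real_inner_le_norm (v' - v) h
        have hhn : ‖h‖ ≤ ‖A‖ * ‖x' - x‖ := by rw [hh, ← map_sub]; exact A.le_opNorm _
        nlinarith [norm_nonneg (v' - v), norm_nonneg h, abs_nonneg ⟪v' - v, h⟫]
      have hvp : ⟪v', h⟫ = ⟪v, h⟫ + ⟪v' - v, h⟫ := by rw [inner_sub_left]; ring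
      have hhn : ‖h‖ ≤ ‖A‖ * ‖x' - x‖ := by rw [hh, ← map_sub]; exact A.le_opNorm _
      rw [hip, abs_le]
      constructor
      · rw [hvp] at hlo
        have := abs_le.mp hip2
        nlinarith [norm_nonneg h, norm_nonneg (x' - x)]
      · nlinarith [norm_nonneg h, norm_nonneg A, norm_nonneg (x' - x)]
    rw [hasGradientAt_iff_isLittleO, Asymptotics.isLittleO_iff]
    intro ε hε
    rw [Metric.eventually_nhds_iff]
    refine ⟨ε / ((3 / 2) * ‖A‖ ^ 2 + 1), by positivity, fun x' hx' => ?_⟩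
    rw [dist_eq_norm] at hx'
    have hb := hbound x'
    have hC : (0:ℝ) < (3 / 2) * ‖A‖ ^ 2 + 1 := by positivity
    have h2 : (3 / 2) * ‖A‖ ^ 2 * ‖x' - x‖ ^ 2 ≤ ε * ‖x' - x‖ := by
      have h3 : ((3 / 2) * ‖A‖ ^ 2 + 1) * ‖x' - x‖ ≤ ε := by
        calc ((3 / 2) * ‖A‖ ^ 2 + 1) * ‖x' - x‖ ≤ ((3 / 2) * ‖A‖ ^ 2 + 1) *
            (ε / ((3 / 2) * ‖A‖ ^ 2 + 1)) := by
              exact mul_le_mul_of_nonneg_left hx'.le hC.le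
          _ = ε := by field_simp
      nlinarith [norm_nonneg (x' - x), sq_nonneg ‖x' - x‖]
    calc ‖F x' - F x - ⟪A.adjoint (A x + B y + c), x' - x⟫‖ ≤
        (3 / 2) * ‖A‖ ^ 2 * ‖x' - x‖ ^ 2 := by
          rw [Real.norm_eq_abs]; exact hb
      _ ≤ ε * ‖x' - x‖ := h2
  · -- Lipschitz statement
    intro x₁ x₂
    have hkey := key x₁ x₂ (ysel x₁) (ysel x₂) (hysel x₁) (hysel x₂)
    calc ‖A.adjoint (A x₁ + B (ysel x₁) + c) - A.adjoint (A x₂ + B (ysel x₂) + c)‖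
        = ‖A.adjoint ((A x₁ + B (ysel x₁) + c) - (A x₂ + B (ysel x₂) + c))‖ := by
          rw [map_sub]
      _ ≤ ‖A.adjoint‖ * ‖(A x₁ + B (ysel x₁) + c) - (A x₂ + B (ysel x₂) + c)‖ :=
          (A.adjoint).le_opNorm _
      _ = ‖A‖ * ‖(A x₁ + B (ysel x₁) + c) - (A x₂ + B (ysel x₂) + c)‖ := by
          rw [LinearIsometryEquiv.norm_map]
      _ ≤ ‖A‖ * (‖A‖ * ‖x₁ - x₂‖) := by
          exact mul_le_mul_of_nonneg_left hkey (norm_nonneg A)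
      _ = ‖A‖ ^ 2 * ‖x₁ - x₂‖ := by ring
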